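/- Let m ≥ 2 and let X be a differentiable vector field on ℂ^m. Then L_X(∘)(Y,Z) = 0 for all differentiable vector fields Y, Z if and only if the following three conditions hold: [δ_0, X] = 0; [δ_1, X] ∘ δ_{m−1} = 0; and [δ_i, X] = i · (δ_{i−1} ∘ [δ_1, X]) for every 2 ≤ i ≤ m−1. -/

import Mathlib

open scoped BigOperators

noncomputable section

/-- The truncated-polynomial multiplication on `ℂ^m ≅ ℂ[X]/(X^m)`:
`(u ∘ v)_k = Σ_{i+j=k} u_i v_j`. -/
def tmul {m : ℕ} (u v : Fin m → ℂ) : Fin m → ℂ :=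
  fun k => ∑ i : Fin m, ∑ j : Fin m,
    if (i : ℕ) + (j : ℕ) = (k : ℕ) then u i * v j else 0

/-- The `i`-th standard basis vector of `ℂ^m` (zero if `i ≥ m`); `std 0` is the unit `e`. -/
def std {m : ℕ} (i : ℕ) : Fin m → ℂ := fun j => if (j : ℕ) = i then 1 else 0

/-- Lie bracket of vector fields on `ℂ^m`: `[X,Y](p) = DY(p)(X(p)) − DX(p)(Y(p))`. -/
def bracket {m : ℕ} (X Y : (Fin m → ℂ) → Fin m → ℂ) : (Fin m → ℂ) → Fin m → ℂ :=
  fun p => fderiv ℂ Y p (X p) - fderiv ℂ X p (Y p)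

/-- Pointwise truncated product of vector fields. -/
def pmul {m : ℕ} (X Y : (Fin m → ℂ) → Fin m → ℂ) : (Fin m → ℂ) → Fin m → ℂ :=
  fun p => tmul (X p) (Y p)

/-- Lie derivative of the multiplication `∘` along `X`:
`L_X(∘)(Y,Z) = [X, Y∘Z] − [X,Y]∘Z − Y∘[X,Z]`. -/
def lieD {m : ℕ} (X Y Z : (Fin m → ℂ) → Fin m → ℂ) : (Fin m → ℂ) → Fin m → ℂ :=
  fun p => bracket X (pmul Y Z) p - tmul (bracket X Y p) (Z p) - tmul (Y p) (bracket X Z p)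

/-- The Euler field `E(t) = (t_0 + a, t_1 + 1, t_2, …, t_{m−1})`. -/
def Efield {m : ℕ} (a : ℂ) : (Fin m → ℂ) → Fin m → ℂ :=
  fun p => p + a • std 0 + std 1

namespace Stmt4Aux

variable {m : ℕ}

lemma tmul_add_left (u u' v : Fin m → ℂ) : tmul (u + u') v = tmul u v + tmul u' v := by
  funext k
  simp only [tmul, Pi.add_apply, add_mul, ← Finset.sum_add_distrib]
  refine Finset.sum_congr rfl fun i _ => Finset.sum_congr rfl fun j _ => ?_
  split <;> simp

lemma tmul_add_right (u v v' : Fin m → ℂ) : tmul u (v + v') = tmul u v + tmul u v' := by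
  funext k
  simp only [tmul, Pi.add_apply, mul_add, ← Finset.sum_add_distrib]
  refine Finset.sum_congr rfl fun i _ => Finset.sum_congr rfl fun j _ => ?_
  split <;> simp

lemma tmul_smul_left (c : ℂ) (u v : Fin m → ℂ) : tmul (c • u) v = c • tmul u v := by
  funext k
  simp only [tmul, Pi.smul_apply, smul_eq_mul, Finset.mul_sum]
  refine Finset.sum_congr rfl fun i _ => Finset.sum_congr rfl fun j _ => ?_
  split <;> ring

lemma tmul_smul_right (c : ℂ) (u v : Fin m → ℂ) : tmul u (c • v) = c • tmul u v := by
  funext k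
  simp only [tmul, Pi.smul_apply, smul_eq_mul, Finset.mul_sum]
  refine Finset.sum_congr rfl fun i _ => Finset.sum_congr rfl fun j _ => ?_
  split <;> ring

lemma tmul_zero_left (v : Fin m → ℂ) : tmul 0 v = 0 := by
  funext k; simp [tmul]

lemma tmul_zero_right (v : Fin m → ℂ) : tmul v 0 = 0 := by
  funext k; simp [tmul]

lemma tmul_sub_left (u u' v : Fin m → ℂ) : tmul (u - u') v = tmul u v - tmul u' v := by
  funext k
  simp only [tmul, Pi.sub_apply, sub_mul, ← Finset.sum_sub_distrib]
  refine Finset.sum_congr rfl fun i _ => Finset.sum_congr rfl fun j _ => ?_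
  split <;> simp

lemma tmul_sub_right (u v v' : Fin m → ℂ) : tmul u (v - v') = tmul u v - tmul u v' := by
  funext k
  simp only [tmul, Pi.sub_apply, mul_sub, ← Finset.sum_sub_distrib]
  refine Finset.sum_congr rfl fun i _ => Finset.sum_congr rfl fun j _ => ?_
  split <;> simp

lemma tmul_sum_left {ι : Type*} (s : Finset ι) (f : ι → Fin m → ℂ) (v : Fin m → ℂ) :
    tmul (∑ i ∈ s, f i) v = ∑ i ∈ s, tmul (f i) v := by
  classical
  induction s using Finset.induction_on with
  | empty => simp [tmul_zero_left]
  | insert _ _ h ih => simp [Finset.sum_insert h, tmul_add_left, ih]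

lemma tmul_sum_right {ι : Type*} (s : Finset ι) (f : ι → Fin m → ℂ) (v : Fin m → ℂ) :
    tmul v (∑ i ∈ s, f i) = ∑ i ∈ s, tmul v (f i) := by
  classical
  induction s using Finset.induction_on with
  | empty => simp [tmul_zero_right]
  | insert _ _ h ih => simp [Finset.sum_insert h, tmul_add_right, ih]

lemma tmul_comm (u v : Fin m → ℂ) : tmul u v = tmul v u := by
  funext k
  rw [tmul, tmul, Finset.sum_comm]
  refine Finset.sum_congr rfl fun i _ => Finset.sum_congr rfl fun j _ => ?_
  rw [Nat.add_comm (j : ℕ) (i : ℕ)]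
  split <;> ring

lemma std_eq_zero {i : ℕ} (h : m ≤ i) : (std i : Fin m → ℂ) = 0 := by
  funext j
  have : (j : ℕ) ≠ i := by omega
  simp [std, this]

lemma tmul_std_std (a b : ℕ) : tmul (std a : Fin m → ℂ) (std b) = std (a + b) := by
  funext k
  by_cases hk : (k : ℕ) = a + b
  · have ha : a < m := by have := k.isLt; omega
    have hb : b < m := by have := k.isLt; omega
    have hr : (std (a+b) : Fin m → ℂ) k = 1 := by simp [std, hk]
    rw [hr, tmul]
    rw [Finset.sum_eq_single (⟨a, ha⟩ : Fin m)]
    · rw [Finset.sum_eq_single (⟨b, hb⟩ : Fin m)]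
      · simp [std, hk]
      · intro j _ hj
        have : (j : ℕ) ≠ b := fun h => hj (Fin.ext h)
        simp [std, this]
      · intro h; exact absurd (Finset.mem_univ _) h
    · intro i _ hi
      have : (i : ℕ) ≠ a := fun h => hi (Fin.ext h)
      apply Finset.sum_eq_zero; intro j _
      simp [std, this]
    · intro h; exact absurd (Finset.mem_univ _) h
  · have hr : (std (a+b) : Fin m → ℂ) k = 0 := by simp [std, hk]
    rw [hr, tmul]
    apply Finset.sum_eq_zero; intro i _
    apply Finset.sum_eq_zero; intro j _
    by_cases h1 : (i : ℕ) = a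
    · by_cases h2 : (j : ℕ) = b
      · have : (i : ℕ) + (j : ℕ) ≠ (k : ℕ) := by omega
        simp [this]
      · simp [std, h2]
    · simp [std, h1]

lemma basis_expand (u : Fin m → ℂ) : u = ∑ i : Fin m, u i • (std (i : ℕ) : Fin m → ℂ) := by
  funext k
  rw [Finset.sum_apply]
  simp only [Pi.smul_apply, std, smul_eq_mul, Fin.val_eq_val, mul_ite, mul_one, mul_zero]
  rw [Finset.sum_ite_eq Finset.univ k u]
  simp

lemma tmul_std_zero (u : Fin m → ℂ) : tmul u (std 0) = u := by
  conv_lhs => rw [basis_expand u]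
  rw [tmul_sum_left]
  simp only [tmul_smul_left, tmul_std_std, Nat.add_zero]
  exact (basis_expand u).symm

lemma std_zero_tmul (u : Fin m → ℂ) : tmul (std 0) u = u := by
  rw [tmul_comm]; exact tmul_std_zero u

lemma tmul_std_assoc (a b : ℕ) (w : Fin m → ℂ) :
    tmul (std a) (tmul (std b) w) = tmul (std (a + b)) w := by
  conv_lhs => rw [basis_expand w]
  conv_rhs => rw [basis_expand w]
  rw [tmul_sum_right, tmul_sum_right, tmul_sum_right]
  refine Finset.sum_congr rfl fun c _ => ?_
  simp only [tmul_smul_right, tmul_std_std]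
  rw [Nat.add_assoc]

lemma expand (u v : Fin m → ℂ) :
    tmul u v = ∑ i : Fin m, ∑ j : Fin m,
      (u i * v j) • tmul (std (i : ℕ) : Fin m → ℂ) (std (j : ℕ)) := by
  conv_lhs => rw [basis_expand u, basis_expand v]
  rw [tmul_sum_left]
  refine Finset.sum_congr rfl fun i _ => ?_
  rw [tmul_smul_left, tmul_sum_right, Finset.smul_sum]
  refine Finset.sum_congr rfl fun j _ => ?_
  rw [tmul_smul_right, smul_smul]

/-- Characterization of derivations of the truncated algebra. -/
lemma deriv_iff (hm : 2 ≤ m) (φ : (Fin m → ℂ) →L[ℂ] (Fin m → ℂ)) :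
    (∀ u v : Fin m → ℂ, φ (tmul u v) = tmul (φ u) v + tmul u (φ v)) ↔
      (φ (std 0) = 0 ∧ tmul (φ (std 1)) (std (m - 1)) = 0 ∧
        ∀ i : ℕ, 2 ≤ i → i ≤ m - 1 →
          φ (std i) = (i : ℂ) • tmul (std (i - 1)) (φ (std 1))) := by
  constructor
  · intro D
    have hpsi : ∀ i : ℕ, 1 ≤ i → φ (std i) = (i : ℂ) • tmul (std (i - 1)) (φ (std 1)) := by
      intro i hi
      induction i, hi using Nat.le_induction with
      | base => simp [std_zero_tmul]
      | succ i hi ih =>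
        have h1 := D (std 1) (std i)
        rw [tmul_std_std, Nat.add_comm 1 i] at h1
        rw [h1, ih, tmul_smul_right, tmul_std_assoc]
        have e1 : 1 + (i - 1) = i := by omega
        rw [e1, tmul_comm (φ (std 1)) (std i), Nat.add_sub_cancel]
        push_cast
        rw [add_smul, one_smul, add_comm]
    refine ⟨?_, ?_, fun i h2 _ => hpsi i (by omega)⟩
    · have h0 := D (std 0) (std 0)
      rw [tmul_std_std] at h0
      norm_num at h0
      rw [tmul_std_zero, std_zero_tmul] at h0
      have h0' : φ (std 0) + 0 = φ (std 0) + φ (std 0) := by rw [add_zero]; exact h0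
      exact (add_left_cancel h0').symm
    · have hz : φ (std m : Fin m → ℂ) = 0 := by rw [std_eq_zero (le_refl m)]; exact map_zero φ
      have h2 := hpsi m (by omega)
      rw [hz] at h2
      have hmc : (m : ℂ) ≠ 0 := Nat.cast_ne_zero.mpr (by omega)
      have h3 := (smul_eq_zero.mp h2.symm).resolve_left hmc
      rw [tmul_comm]; exact h3
  · rintro ⟨ha, hb, hc⟩
    have hpsi : ∀ i : ℕ, 1 ≤ i → i ≤ m - 1 →
        φ (std i) = (i : ℂ) • tmul (std (i - 1)) (φ (std 1)) := by
      intro i h1 h2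
      rcases Nat.lt_or_ge i 2 with h | h
      · have : i = 1 := by omega
        subst this; simp [std_zero_tmul]
      · exact hc i h h2
    have key : ∀ a b : ℕ, a ≤ m - 1 → b ≤ m - 1 →
        φ (std (a + b)) = tmul (φ (std a)) (std b) + tmul (std a) (φ (std b)) := by
      intro a b hA hB
      rcases Nat.eq_zero_or_pos a with ha0 | ha1
      · subst ha0
        rw [ha, tmul_zero_left, std_zero_tmul, zero_add, zero_add]
      rcases Nat.eq_zero_or_pos b with hb0 | hb1
      · subst hb0
        rw [ha, tmul_zero_right, tmul_std_zero, add_zero, add_zero]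
      have hφa := hpsi a ha1 hA
      have hφb := hpsi b hb1 hB
      rw [hφa, hφb, tmul_smul_left, tmul_smul_right,
        tmul_comm (tmul (std (a - 1)) (φ (std 1))) (std b),
        tmul_std_assoc, tmul_std_assoc]
      have e1 : b + (a - 1) = a + b - 1 := by omega
      have e2 : a + (b - 1) = a + b - 1 := by omega
      rw [e1, e2, ← add_smul]
      by_cases h : a + b ≤ m - 1
      · rw [hpsi (a + b) (by omega) h]
        push_cast
        rfl
      · have hz : φ (std (a + b) : Fin m → ℂ) = 0 := by
          rw [std_eq_zero (by omega)]; exact map_zero φ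
        rw [hz]
        rcases Nat.lt_or_ge (a + b) (m + 1) with hl | hl
        · have e3 : a + b - 1 = m - 1 := by omega
          rw [e3, tmul_comm, hb, smul_zero]
        · rw [std_eq_zero (show m ≤ a + b - 1 by omega), tmul_zero_left, smul_zero]
    intro u v
    have hu : φ u = ∑ i : Fin m, u i • φ (std (i : ℕ) : Fin m → ℂ) := by
      conv_lhs => rw [basis_expand u]
      rw [map_sum]
      exact Finset.sum_congr rfl fun i _ => map_smul φ _ _
    have hv : φ v = ∑ j : Fin m, v j • φ (std (j : ℕ) : Fin m → ℂ) := by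
      conv_lhs => rw [basis_expand v]
      rw [map_sum]
      exact Finset.sum_congr rfl fun j _ => map_smul φ _ _
    have L : φ (tmul u v) = ∑ i : Fin m, ∑ j : Fin m,
        (u i * v j) • φ (tmul (std (i : ℕ) : Fin m → ℂ) (std (j : ℕ))) := by
      rw [expand u v, map_sum]
      refine Finset.sum_congr rfl fun i _ => ?_
      rw [map_sum]
      exact Finset.sum_congr rfl fun j _ => map_smul φ _ _
    have R1 : tmul (φ u) v = ∑ i : Fin m, ∑ j : Fin m,
        (u i * v j) • tmul (φ (std (i : ℕ) : Fin m → ℂ)) (std (j : ℕ)) := by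
      rw [hu]
      conv_lhs => rw [basis_expand v]
      rw [tmul_sum_left]
      refine Finset.sum_congr rfl fun i _ => ?_
      rw [tmul_smul_left, tmul_sum_right, Finset.smul_sum]
      refine Finset.sum_congr rfl fun j _ => ?_
      rw [tmul_smul_right, smul_smul]
    have R2 : tmul u (φ v) = ∑ i : Fin m, ∑ j : Fin m,
        (u i * v j) • tmul (std (i : ℕ) : Fin m → ℂ) (φ (std (j : ℕ))) := by
      rw [hv]
      conv_lhs => rw [basis_expand u]
      rw [tmul_sum_left]
      refine Finset.sum_congr rfl fun i _ => ?_
      rw [tmul_smul_left, tmul_sum_right, Finset.smul_sum]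
      refine Finset.sum_congr rfl fun j _ => ?_
      rw [tmul_smul_right, smul_smul]
    rw [L, R1, R2, ← Finset.sum_add_distrib]
    refine Finset.sum_congr rfl fun i _ => ?_
    rw [← Finset.sum_add_distrib]
    refine Finset.sum_congr rfl fun j _ => ?_
    rw [← smul_add, tmul_std_std,
      key (i : ℕ) (j : ℕ) (by have := i.isLt; omega) (by have := j.isLt; omega)]

/-- `tmul` as a bilinear map. -/
def tmulL : (Fin m → ℂ) →ₗ[ℂ] (Fin m → ℂ) →ₗ[ℂ] (Fin m → ℂ) :=
  LinearMap.mk₂ ℂ tmul tmul_add_left tmul_smul_left tmul_add_right tmul_smul_right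

/-- `tmul` as a continuous bilinear map. -/
def tmulCLM : (Fin m → ℂ) →L[ℂ] (Fin m → ℂ) →L[ℂ] (Fin m → ℂ) :=
  LinearMap.toContinuousLinearMap
    ((LinearMap.toContinuousLinearMap :
        ((Fin m → ℂ) →ₗ[ℂ] (Fin m → ℂ)) ≃ₗ[ℂ] ((Fin m → ℂ) →L[ℂ] (Fin m → ℂ))).toLinearMap.comp
      tmulL)

lemma tmulCLM_apply (u v : Fin m → ℂ) : tmulCLM u v = tmul u v := rfl

lemma fderiv_pmul (Y Z : (Fin m → ℂ) → Fin m → ℂ) (p : Fin m → ℂ)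
    (hY : DifferentiableAt ℂ Y p) (hZ : DifferentiableAt ℂ Z p) (w : Fin m → ℂ) :
    fderiv ℂ (pmul Y Z) p w
      = tmul (fderiv ℂ Y p w) (Z p) + tmul (Y p) (fderiv ℂ Z p w) := by
  have h := (tmulCLM (m := m)).hasFDerivAt_of_bilinear hY.hasFDerivAt hZ.hasFDerivAt
  have hp : pmul Y Z = fun q => tmulCLM (Y q) (Z q) := rfl
  rw [hp, h.fderiv]
  simp [ContinuousLinearMap.precompR, ContinuousLinearMap.precompL, tmulCLM_apply, add_comm]

lemma lieD_eq {X Y Z : (Fin m → ℂ) → Fin m → ℂ} {p : Fin m → ℂ}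
    (hY : DifferentiableAt ℂ Y p) (hZ : DifferentiableAt ℂ Z p) :
    lieD X Y Z p = tmul (fderiv ℂ X p (Y p)) (Z p) + tmul (Y p) (fderiv ℂ X p (Z p))
      - fderiv ℂ X p (tmul (Y p) (Z p)) := by
  unfold lieD bracket
  rw [fderiv_pmul Y Z p hY hZ (X p)]
  rw [tmul_sub_left, tmul_sub_right]
  simp only [pmul]
  abel

end Stmt4Aux

open Stmt4Aux in
/-- (Lemma 29 of the paper.) For `m ≥ 2` and a differentiable vector
field `X` on `ℂ^m`: `L_X(∘) = 0` (i.e. `L_X(∘)(Y,Z) = 0` for all differentiable `Y, Z`) iff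
`[δ_0, X] = 0`, `[δ_1, X] ∘ δ_{m−1} = 0`, and `[δ_i, X] = i·(δ_{i−1} ∘ [δ_1, X])` for
`2 ≤ i ≤ m−1`. -/
theorem stmt4 {m : ℕ} (hm : 2 ≤ m)
    (X : (Fin m → ℂ) → Fin m → ℂ) (hX : Differentiable ℂ X) :
    (∀ Y Z : (Fin m → ℂ) → Fin m → ℂ, Differentiable ℂ Y → Differentiable ℂ Z →
        lieD X Y Z = 0) ↔
      (bracket (fun _ => std 0) X = 0 ∧
        (fun p => tmul (bracket (fun _ => std 1) X p) (std (m - 1)))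
          = (0 : (Fin m → ℂ) → Fin m → ℂ) ∧
        ∀ i : ℕ, 2 ≤ i → i ≤ m - 1 →
          bracket (fun _ => std i) X
            = fun p => (i : ℂ) • tmul (std (i - 1)) (bracket (fun _ => std 1) X p)) := by
  have hbr : ∀ (c p : Fin m → ℂ), bracket (fun _ => c) X p = fderiv ℂ X p c := by
    intro c p
    simp [bracket]
  constructor
  · intro hLie
    have hder : ∀ p u v : Fin m → ℂ,
        fderiv ℂ X p (tmul u v)
          = tmul (fderiv ℂ X p u) v + tmul u (fderiv ℂ X p v) := by
      intro p u v
      have h := congrFun (hLie (fun _ => u) (fun _ => v)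
        (differentiable_const u) (differentiable_const v)) p
      have h2 : lieD X (fun _ => u) (fun _ => v) p =
          tmul (fderiv ℂ X p u) v + tmul u (fderiv ℂ X p v) - fderiv ℂ X p (tmul u v) :=
        lieD_eq (differentiableAt_const u) (differentiableAt_const v)
      rw [h2] at h
      simp only [Pi.zero_apply] at h
      exact (sub_eq_zero.mp h).symm
    refine ⟨?_, ?_, ?_⟩
    · funext p
      simp only [Pi.zero_apply]
      rw [hbr]
      exact ((deriv_iff hm (fderiv ℂ X p)).mp (hder p)).1
    · funext p
      simp only [Pi.zero_apply]
      rw [hbr]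
      exact ((deriv_iff hm (fderiv ℂ X p)).mp (hder p)).2.1
    · intro i h2 h3
      funext p
      rw [hbr, hbr]
      exact ((deriv_iff hm (fderiv ℂ X p)).mp (hder p)).2.2 i h2 h3
  · rintro ⟨h0, h1, hc⟩
    have hder : ∀ p u v : Fin m → ℂ,
        fderiv ℂ X p (tmul u v)
          = tmul (fderiv ℂ X p u) v + tmul u (fderiv ℂ X p v) := by
      intro p
      apply (deriv_iff hm (fderiv ℂ X p)).mpr
      refine ⟨?_, ?_, ?_⟩
      · have h := congrFun h0 p
        rw [hbr] at h
        simpa using h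
      · have h := congrFun h1 p
        rw [hbr] at h
        simpa using h
      · intro i hi2 hi3
        have h := congrFun (hc i hi2 hi3) p
        rw [hbr, hbr] at h
        exact h
    intro Y Z hY hZ
    funext p
    simp only [Pi.zero_apply]
    rw [lieD_eq (hY p) (hZ p), hder p (Y p) (Z p)]
    exact sub_self _
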